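/- Let A : ℝ → ℂ^{n×n} be a Hermitian matrix function depending analytically on ω, with analytic eigenvalue functions λ̃₁, …, λ̃ₙ : ℝ → ℝ and analytic, pointwise orthonormal eigenvector functions v₁, …, vₙ : ℝ → ℂⁿ satisfying A(ω)vⱼ(ω) = λ̃ⱼ(ω)vⱼ(ω) for all ω. Then for every j and every ω ∈ ℝ, the second derivative of the eigenvalue satisfies d²λ̃ⱼ(ω)/dω² = vⱼ(ω)* (d²A(ω)/dω²) vⱼ(ω) + 2 Σ_{k : λ̃ₖ(ω) ≠ λ̃ⱼ(ω)} |vₖ(ω)* (dA(ω)/dω) vⱼ(ω)|² / (λ̃ⱼ(ω) − λ̃ₖ(ω)). -/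

import Mathlib

open Matrix
open scoped InnerProductSpace

lemma star_dot_flip {n : ℕ} (a b : Fin n → ℂ) : star (star a ⬝ᵥ b) = star b ⬝ᵥ a := by
  simp [dotProduct, star_sum, star_mul', mul_comm]

lemma herm_dot {n : ℕ} (M : Matrix (Fin n) (Fin n) ℂ) (hM : ∀ i k, M i k = star (M k i))
    (a b : Fin n → ℂ) : star a ⬝ᵥ M *ᵥ b = star (star b ⬝ᵥ M *ᵥ a) := by
  simp only [dotProduct, mulVec, Finset.mul_sum, star_sum]
  rw [Finset.sum_comm]
  refine Finset.sum_congr rfl fun k _ => Finset.sum_congr rfl fun i _ => ?_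
  rw [hM i k]
  simp only [star_mul', star_star, Pi.star_apply]
  ring

lemma hasDerivAt_sandwich {n : ℕ} (a b : ℝ → Fin n → ℂ) (M : ℝ → Matrix (Fin n) (Fin n) ℂ)
    (a' b' : Fin n → ℂ) (M' : Matrix (Fin n) (Fin n) ℂ) (t : ℝ)
    (ha : ∀ i, HasDerivAt (fun s => a s i) (a' i) t)
    (hb : ∀ i, HasDerivAt (fun s => b s i) (b' i) t)
    (hM : ∀ i k, HasDerivAt (fun s => M s i k) (M' i k) t) :
    HasDerivAt (fun s => star (a s) ⬝ᵥ (M s) *ᵥ (b s))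
      (star a' ⬝ᵥ M t *ᵥ b t + star (a t) ⬝ᵥ M' *ᵥ b t + star (a t) ⬝ᵥ M t *ᵥ b') t := by
  have key : HasDerivAt (fun s => ∑ i, ∑ k, star (a s i) * (M s i k * b s k))
      (∑ i, ∑ k, (star (a' i) * (M t i k * b t k)
        + star (a t i) * (M' i k * b t k + M t i k * b' k))) t := by
    refine HasDerivAt.fun_sum fun i _ => HasDerivAt.fun_sum fun k _ => ?_
    exact ((ha i).star).mul ((hM i k).mul (hb k))
  have hfun : (fun s => star (a s) ⬝ᵥ (M s) *ᵥ (b s))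
      = fun s => ∑ i, ∑ k, star (a s i) * (M s i k * b s k) := by
    funext s; simp [dotProduct, mulVec, Finset.mul_sum]
  have hval : star a' ⬝ᵥ M t *ᵥ b t + star (a t) ⬝ᵥ M' *ᵥ b t + star (a t) ⬝ᵥ M t *ᵥ b'
      = ∑ i, ∑ k, (star (a' i) * (M t i k * b t k)
        + star (a t i) * (M' i k * b t k + M t i k * b' k)) := by
    simp only [dotProduct, mulVec, Finset.mul_sum, Pi.star_apply, ← Finset.sum_add_distrib]
    refine Finset.sum_congr rfl fun i _ => Finset.sum_congr rfl fun k _ => ?_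
    ring
  rw [hfun, hval]; exact key

lemma hasDerivAt_dot' {n : ℕ} (a b : ℝ → Fin n → ℂ) (a' b' : Fin n → ℂ) (t : ℝ)
    (ha : ∀ i, HasDerivAt (fun s => a s i) (a' i) t)
    (hb : ∀ i, HasDerivAt (fun s => b s i) (b' i) t) :
    HasDerivAt (fun s => star (a s) ⬝ᵥ b s) (star a' ⬝ᵥ b t + star (a t) ⬝ᵥ b') t := by
  have key : HasDerivAt (fun s => ∑ i, star (a s i) * b s i)
      (∑ i, (star (a' i) * b t i + star (a t i) * b' i)) t :=
    HasDerivAt.fun_sum fun i _ => ((ha i).star).mul (hb i)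
  have hfun : (fun s => star (a s) ⬝ᵥ b s) = fun s => ∑ i, star (a s i) * b s i := by
    funext s; simp [dotProduct]
  have hval : star a' ⬝ᵥ b t + star (a t) ⬝ᵥ b'
      = ∑ i, (star (a' i) * b t i + star (a t i) * b' i) := by
    simp [dotProduct, Finset.sum_add_distrib]
  rw [hfun, hval]; exact key

lemma dot_comb {n : ℕ} (a b c : Fin n → ℂ) (c1 c2 : ℂ) :
    a ⬝ᵥ (fun i => c1 * b i + c2 * c i) = c1 * (a ⬝ᵥ b) + c2 * (a ⬝ᵥ c) := by
  simp [dotProduct, mul_add, Finset.sum_add_distrib, Finset.mul_sum, mul_left_comm]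

noncomputable def Lfun {n : ℕ} (w : Fin n → ℂ) (M : Matrix (Fin n) (Fin n) ℂ) :
    (Fin n → ℂ) →ₗ[ℂ] ℂ :=
  { toFun := fun x => star w ⬝ᵥ M *ᵥ x
    map_add' := by intro x y; rw [Matrix.mulVec_add, dotProduct_add]
    map_smul' := by intro c x; rw [Matrix.mulVec_smul, dotProduct_smul]; rfl }

lemma expand_orthonormal {n : ℕ} (u : Fin n → Fin n → ℂ)
    (h : ∀ k l, star (u k) ⬝ᵥ u l = if k = l then 1 else 0) (x : Fin n → ℂ) :
    x = ∑ k, (star (u k) ⬝ᵥ x) • u k := by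
  classical
  set U : Matrix (Fin n) (Fin n) ℂ := Matrix.of fun i k => u k i with hUdef
  have hU1 : Uᴴ * U = 1 := by
    ext k l
    have h1 : (Uᴴ * U) k l = star (u k) ⬝ᵥ u l := by
      simp [Matrix.mul_apply, Matrix.conjTranspose_apply, dotProduct, hUdef]
    rw [h1, h k l, Matrix.one_apply]
  have hU2 : U * Uᴴ = 1 := mul_eq_one_comm.mp hU1
  funext i
  rw [Finset.sum_apply]
  simp only [Pi.smul_apply, smul_eq_mul]
  have h1 : ∑ k, (star (u k) ⬝ᵥ x) * u k i = (U *ᵥ (Uᴴ *ᵥ x)) i := by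
    simp only [mulVec, dotProduct, Matrix.conjTranspose_apply, Matrix.of_apply, hUdef,
      Pi.star_apply]
    exact Finset.sum_congr rfl fun k _ => by ring
  rw [h1, mulVec_mulVec, hU2, one_mulVec]

/-- **Second derivative of an eigenvalue of an analytic Hermitian matrix function.**
Let `A : ℝ → ℂ^{n×n}` be Hermitian with real-analytic entries, with entrywise first
and second derivatives `A'` and `A''`, analytic eigenvalue functions `λ̃₁, …, λ̃ₙ` and
analytic, pointwise orthonormal unit eigenvector functions `v₁, …, vₙ`. Then
`d²λ̃ⱼ(ω)/dω² = vⱼ* A'' vⱼ + 2 Σ_{k : λ̃ₖ(ω) ≠ λ̃ⱼ(ω)} |vₖ* A' vⱼ|² / (λ̃ⱼ(ω) − λ̃ₖ(ω))`. -/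
theorem second_deriv_eigenvalue_formula
    (n : ℕ) (A A' A'' : ℝ → Matrix (Fin n) (Fin n) ℂ)
    (hAnal : ∀ i j : Fin n, ∀ x : ℝ, AnalyticAt ℝ (fun ω : ℝ => A ω i j) x)
    (hHerm : ∀ ω : ℝ, (A ω).IsHermitian)
    (hA' : ∀ i j : Fin n, ∀ ω : ℝ, HasDerivAt (fun t : ℝ => A t i j) (A' ω i j) ω)
    (hA'' : ∀ i j : Fin n, ∀ ω : ℝ, HasDerivAt (fun t : ℝ => A' t i j) (A'' ω i j) ω)
    (lam : Fin n → ℝ → ℝ)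
    (hlamAnal : ∀ j : Fin n, ∀ x : ℝ, AnalyticAt ℝ (lam j) x)
    (v : Fin n → ℝ → EuclideanSpace ℂ (Fin n))
    (hvAnal : ∀ j i : Fin n, ∀ x : ℝ, AnalyticAt ℝ (fun ω : ℝ => v j ω i) x)
    (heig : ∀ j : Fin n, ∀ ω : ℝ, (A ω).mulVec (v j ω) = (lam j ω : ℂ) • v j ω)
    (hnorm : ∀ j : Fin n, ∀ ω : ℝ, ‖v j ω‖ = 1)
    (horth : ∀ j k : Fin n, ∀ ω : ℝ, j ≠ k → ⟪v j ω, v k ω⟫_ℂ = 0) :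
    ∀ j : Fin n, ∀ ω : ℝ,
      ((deriv (deriv (lam j)) ω : ℝ) : ℂ) =
        star (v j ω) ⬝ᵥ (A'' ω).mulVec (v j ω) +
          2 * ∑ k ∈ Finset.univ.filter (fun k : Fin n => lam k ω ≠ lam j ω),
            ((‖star (v k ω) ⬝ᵥ (A' ω).mulVec (v j ω)‖ : ℝ) : ℂ) ^ 2 /
              (((lam j ω : ℝ) : ℂ) - ((lam k ω : ℝ) : ℂ)) := by
  classical
  intro j ω
  -- Hermitian entries of A, A'
  have hconjA : ∀ t (i k : Fin n), A t i k = star (A t k i) :=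
    fun t i k => ((hHerm t).apply i k).symm
  have hconjA' : ∀ t (i k : Fin n), A' t i k = star (A' t k i) := by
    intro t i k
    have h2 := (hA' k i t).star
    rw [show (fun s => star (A s k i)) = (fun s => A s i k) from
      funext fun s => (hconjA s i k).symm] at h2
    exact (hA' i k t).unique h2
  -- orthonormality as dot products
  have hdotinner : ∀ (x y : EuclideanSpace ℂ (Fin n)), star x ⬝ᵥ y = ⟪x, y⟫_ℂ := by
    intro x y
    rw [PiLp.inner_apply]
    simp [dotProduct, RCLike.inner_apply]
    exact Finset.sum_congr rfl fun _ _ => mul_comm _ _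
  have horthD : ∀ (k l : Fin n) (t : ℝ), star (v k t) ⬝ᵥ (v l t) = if k = l then 1 else 0 := by
    intro k l t
    by_cases h : k = l
    · subst h
      rw [hdotinner, inner_self_eq_norm_sq_to_K, hnorm]
      simp
    · rw [hdotinner, horth k l t h]
      simp [h]
  -- eigen dot
  have hAdot : ∀ (t : ℝ) (k : Fin n) (x : Fin n → ℂ),
      star (v k t) ⬝ᵥ (A t) *ᵥ x = (lam k t : ℂ) * (star (v k t) ⬝ᵥ x) := by
    intro t k x
    rw [herm_dot (A t) (hconjA t) (v k t) x, heig k t]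
    rw [dotProduct_smul, smul_eq_mul, star_mul', star_dot_flip]
    simp [Complex.conj_ofReal]
  -- derivative of eigenvector components
  set W' : ℝ → Fin n → ℂ := fun t i => deriv (fun s => v j s i) t with hW'def
  have hWd : ∀ (i : Fin n) (t : ℝ), HasDerivAt (fun s => v j s i) (W' t i) t :=
    fun i t => ((hvAnal j i t).differentiableAt).hasDerivAt
  -- derivative of the constant norm
  have hnormd : ∀ t : ℝ, star (W' t) ⬝ᵥ v j t + star (v j t) ⬝ᵥ W' t = 0 := by
    intro t
    have hcd : HasDerivAt (fun s => star (v j s) ⬝ᵥ v j s)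
        (star (W' t) ⬝ᵥ v j t + star (v j t) ⬝ᵥ W' t) t :=
      hasDerivAt_dot' (fun s => v j s) (fun s => v j s) (W' t) (W' t) t
        (fun i => hWd i t) (fun i => hWd i t)
    have hconst : (fun s => star (v j s) ⬝ᵥ v j s) = fun _ => (1 : ℂ) := by
      funext s; rw [horthD j j s]; simp
    rw [hconst] at hcd
    exact ((hasDerivAt_const t (1 : ℂ)).unique hcd).symm
  -- first derivative identity
  have hld : ∀ t : ℝ, ((deriv (lam j) t : ℝ) : ℂ) = star (v j t) ⬝ᵥ A' t *ᵥ v j t := by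
    intro t
    have hF := hasDerivAt_sandwich (fun s => v j s) (fun s => v j s) A
      (W' t) (W' t) (A' t) t (fun i => hWd i t) (fun i => hWd i t) (fun i k => hA' i k t)
    have hlamfun : (fun s => star (v j s) ⬝ᵥ A s *ᵥ v j s)
        = fun s => ((lam j s : ℝ) : ℂ) := by
      funext s; rw [hAdot s j (v j s), horthD j j s]; simp
    rw [hlamfun] at hF
    have hG : HasDerivAt (fun s => ((lam j s : ℝ) : ℂ)) ((deriv (lam j) t : ℝ) : ℂ) t :=
      ((hlamAnal j t).differentiableAt.hasDerivAt).ofReal_comp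
    have h := hG.unique hF
    rw [heig j t, dotProduct_smul, smul_eq_mul, hAdot t j (W' t)] at h
    linear_combination h + ((lam j t : ℝ) : ℂ) * (hnormd t)
  -- second derivative
  have hderiv_anal : ∀ x : ℝ, AnalyticAt ℝ (deriv (lam j)) x :=
    fun x => (AnalyticOnNhd.deriv (fun y _ => hlamAnal j y)) x (Set.mem_univ x)
  have hμ : HasDerivAt (fun t => ((deriv (lam j) t : ℝ) : ℂ))
      ((deriv (deriv (lam j)) ω : ℝ) : ℂ) ω :=
    ((hderiv_anal ω).differentiableAt.hasDerivAt).ofReal_comp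
  rw [show (fun t => ((deriv (lam j) t : ℝ) : ℂ))
      = fun t => star (v j t) ⬝ᵥ A' t *ᵥ v j t from funext hld] at hμ
  have hG2 := hasDerivAt_sandwich (fun s => v j s) (fun s => v j s) A'
    (W' ω) (W' ω) (A'' ω) ω (fun i => hWd i ω) (fun i => hWd i ω) (fun i k => hA'' i k ω)
  have hmain := hμ.unique hG2
  -- matrix elements p and coefficients q
  set p : Fin n → ℂ := fun k => star (v k ω) ⬝ᵥ (A' ω) *ᵥ v j ω with hpdef
  set q : Fin n → ℂ := fun k => star (v k ω) ⬝ᵥ W' ω with hqdef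
  -- derivative of the eigen-equation, coordinatewise
  have hvec : ∀ i, (A' ω *ᵥ v j ω) i + (A ω *ᵥ W' ω) i
      = ((deriv (lam j) ω : ℝ) : ℂ) * v j ω i + ((lam j ω : ℝ) : ℂ) * W' ω i := by
    intro i
    have hL : HasDerivAt (fun s => ∑ m, A s i m * v j s m)
        (∑ m, (A' ω i m * v j ω m + A ω i m * W' ω m)) ω :=
      HasDerivAt.fun_sum fun m _ => (hA' i m ω).mul (hWd m ω)
    have hR : HasDerivAt (fun s => ((lam j s : ℝ) : ℂ) * v j s i)
        (((deriv (lam j) ω : ℝ) : ℂ) * v j ω i + ((lam j ω : ℝ) : ℂ) * W' ω i) ω :=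
      (((hlamAnal j ω).differentiableAt.hasDerivAt).ofReal_comp).mul (hWd i ω)
    have hfun2 : (fun s => ∑ m, A s i m * v j s m)
        = (fun s => ((lam j s : ℝ) : ℂ) * v j s i) := by
      funext s
      have h0 := congrFun (heig j s) i
      simpa [mulVec, dotProduct] using h0
    rw [hfun2] at hL
    have h3 := hR.unique hL
    rw [show (A' ω *ᵥ v j ω) i + (A ω *ᵥ W' ω) i
        = ∑ m, (A' ω i m * v j ω m + A ω i m * W' ω m) from by
      simp [mulVec, dotProduct, Finset.sum_add_distrib]]
    exact h3.symm
  have hvec' : (A' ω *ᵥ v j ω) + (A ω *ᵥ W' ω)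
      = (fun i => ((deriv (lam j) ω : ℝ) : ℂ) * v j ω i + ((lam j ω : ℝ) : ℂ) * W' ω i) :=
    funext fun i => hvec i
  have hEq : ∀ k, p k + ((lam k ω : ℝ) : ℂ) * q k
      = ((deriv (lam j) ω : ℝ) : ℂ) * (if k = j then 1 else 0) + ((lam j ω : ℝ) : ℂ) * q k := by
    intro k
    have h := congrArg (fun x => star (v k ω) ⬝ᵥ x) hvec'
    dsimp only at h
    rw [dotProduct_add, hAdot ω k (W' ω), dot_comb, horthD k j ω] at h
    exact h
  -- normalization derivative at ω in terms of q
  have hE3 : q j + star (q j) = 0 := by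
    have h := hnormd ω
    rw [show star (W' ω) ⬝ᵥ v j ω = star (star (v j ω) ⬝ᵥ W' ω) from (star_dot_flip _ _).symm] at h
    rw [hqdef]
    linear_combination h
  -- expansion of W' ω in the eigenbasis
  have hexpW : W' ω = ∑ k, (star (v k ω) ⬝ᵥ W' ω) • (fun i => v k ω i) :=
    expand_orthonormal (fun k i => v k ω i) (fun k l => horthD k l ω) (W' ω)
  have hS : star (v j ω) ⬝ᵥ A' ω *ᵥ W' ω = ∑ k, q k * star (p k) := by
    have h0 : star (v j ω) ⬝ᵥ A' ω *ᵥ W' ω = Lfun (v j ω) (A' ω) (W' ω) := rfl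
    rw [h0]
    rw [show W' ω = ∑ k, q k • (fun i => v k ω i) from hexpW]
    rw [map_sum]
    refine Finset.sum_congr rfl fun k _ => ?_
    rw [LinearMap.map_smul, smul_eq_mul]
    congr 1
    show star (v j ω) ⬝ᵥ A' ω *ᵥ (fun i => v k ω i) = star (p k)
    rw [herm_dot (A' ω) (hconjA' ω) (v j ω) (fun i => v k ω i)]
  have hT : star (W' ω) ⬝ᵥ A' ω *ᵥ v j ω = ∑ k, star (q k) * p k := by
    rw [herm_dot (A' ω) (hconjA' ω) (W' ω) (v j ω), hS, star_sum]
    exact Finset.sum_congr rfl fun k _ => by rw [star_mul', star_star]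
  rw [hT, hS] at hmain
  -- per-term evaluation
  have hterms : ∑ k, (star (q k) * p k + q k * star (p k))
      = 2 * ∑ k ∈ Finset.univ.filter (fun k : Fin n => lam k ω ≠ lam j ω),
          ((‖p k‖ : ℝ) : ℂ) ^ 2 / (((lam j ω : ℝ) : ℂ) - ((lam k ω : ℝ) : ℂ)) := by
    rw [← Finset.sum_filter_add_sum_filter_not Finset.univ (fun k => lam k ω ≠ lam j ω)]
    have hzero : ∑ k ∈ Finset.univ.filter (fun k : Fin n => ¬ lam k ω ≠ lam j ω),
        (star (q k) * p k + q k * star (p k)) = 0 := by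
      refine Finset.sum_eq_zero fun k hk => ?_
      have hkeq : lam k ω = lam j ω := not_not.mp (Finset.mem_filter.mp hk).2
      by_cases hkj : k = j
      · have h := hEq k
        rw [if_pos hkj] at h
        have hcast : ((lam k ω : ℝ) : ℂ) = ((lam j ω : ℝ) : ℂ) := by exact_mod_cast hkeq
        have hpj : p k = ((deriv (lam j) ω : ℝ) : ℂ) := by
          linear_combination h - q k * hcast
        have hpjstar : star (p k) = p k := by
          rw [hpj]; simp [RCLike.star_def, Complex.conj_ofReal]
        have hE3' : q k + star (q k) = 0 := by rw [hkj]; exact hE3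
        rw [hpjstar]
        linear_combination p k * hE3'
      · have hp0 : p k = 0 := by
          have h := hEq k
          rw [if_neg hkj] at h
          have hcast : ((lam k ω : ℝ) : ℂ) = ((lam j ω : ℝ) : ℂ) := by exact_mod_cast hkeq
          linear_combination h - q k * hcast
        rw [hp0]
        simp
    rw [hzero, add_zero, Finset.mul_sum]
    refine Finset.sum_congr rfl fun k hk => ?_
    have hkne : lam k ω ≠ lam j ω := (Finset.mem_filter.mp hk).2
    have hkj : k ≠ j := fun h => hkne (by rw [h])
    have hd : (((lam j ω : ℝ) : ℂ) - ((lam k ω : ℝ) : ℂ)) ≠ 0 := by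
      rw [← Complex.ofReal_sub]
      exact Complex.ofReal_ne_zero.mpr (sub_ne_zero.mpr hkne.symm)
    have hq : q k = p k / (((lam j ω : ℝ) : ℂ) - ((lam k ω : ℝ) : ℂ)) := by
      have h := hEq k
      rw [if_neg hkj] at h
      rw [eq_div_iff hd]
      linear_combination -h
    have hds : star (((lam j ω : ℝ) : ℂ) - ((lam k ω : ℝ) : ℂ))
        = (((lam j ω : ℝ) : ℂ) - ((lam k ω : ℝ) : ℂ)) := by
      simp [RCLike.star_def, Complex.conj_ofReal]
    have hnp : ((‖p k‖ : ℝ) : ℂ) ^ 2 = p k * star (p k) := by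
      rw [RCLike.star_def, Complex.mul_conj, Complex.normSq_eq_norm_sq]
      push_cast
      ring
    rw [hq, star_div₀, hds, hnp]
    field_simp
    ring
  have hsplit : ∑ k, (star (q k) * p k + q k * star (p k))
      = (∑ k, star (q k) * p k) + ∑ k, q k * star (p k) := Finset.sum_add_distrib
  linear_combination hmain + hterms - hsplit
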